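/- Suppose the Narayana number N_n is a concatenation of two repdigits, i.e., N_n = (1/9)(d1·10^{m1+m2} − (d1−d2)·10^{m2} − d2) with 1 ≤ d1 ≤ 9, 0 ≤ d2 ≤ 9, m1 ≥ m2 ≥ 1, and n > 250. Then |9a·α^n − d1·10^{m1+m2}| < 28·10^{m2}, where α is the real root of x³ − x² − 1 and a = α²/(α³+2). -/
import Mathlib

def narayana : ℕ → ℕ
  | 0 => 0
  | 1 => 1
  | 2 => 1
  | n + 3 => narayana (n + 2) + narayana n

private lemma aux_R0 (α a : ℝ) (h1 : (1.4:ℝ) < α) (h2 : α < 1.5)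
    (ha1 : (0.39:ℝ) < a) (ha2 : a < 0.43) :
    α + a * α - a * α ^ 2 - 3 * a ^ 2 - a ^ 2 * α ^ 2 ≤ 0.5 := by
  nlinarith [mul_nonneg (by linarith : (0:ℝ) ≤ a - 0.39) (by linarith : (0:ℝ) ≤ α - 1.4),
    mul_nonneg (by linarith : (0:ℝ) ≤ 0.43 - a) (by linarith : (0:ℝ) ≤ 1.5 - α),
    sq_nonneg (a - 0.39), sq_nonneg (α - 1.4)]

private lemma aux_sq (α x y : ℝ) (h1 : (1.4:ℝ) < α) (h2 : α < 1.5)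
    (hQ : α * y ^ 2 + (α ^ 2 - α) * y * x + x ^ 2 ≤ 0.5) : x ^ 2 ≤ 1 := by
  have hg : α * (α - 1) ^ 2 < 0.375 := by nlinarith [sq_nonneg (α - 1.5)]
  have P1 : 0 ≤ α * (2 * y + (α - 1) * x) ^ 2 :=
    mul_nonneg (by linarith) (sq_nonneg _)
  have key : (4 - α * (α - 1) ^ 2) * x ^ 2 ≤ 2 := by nlinarith [P1, hQ]
  have H : 0 ≤ (0.375 - α * (α - 1) ^ 2) * x ^ 2 :=
    mul_nonneg (by linarith) (sq_nonneg _)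
  nlinarith [key, H, sq_nonneg x]

set_option maxHeartbeats 1000000 in
theorem first_estimate (α : ℝ) (hα : α ^ 3 = α ^ 2 + 1)
    (a : ℝ) (ha : a = α ^ 2 / (α ^ 3 + 2))
    (n d1 d2 m1 m2 : ℕ) (hn : 250 < n)
    (hd1 : 1 ≤ d1) (hd1' : d1 ≤ 9) (hd2 : d2 ≤ 9) (hm : m2 ≤ m1) (hm2 : 1 ≤ m2)
    (heq : 9 * (narayana n : ℝ) =
      (d1 : ℝ) * 10 ^ (m1 + m2) - ((d1 : ℝ) - (d2 : ℝ)) * 10 ^ m2 - (d2 : ℝ)) :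
    |9 * a * α ^ n - (d1 : ℝ) * 10 ^ (m1 + m2)| < 28 * 10 ^ m2 := by
  have h1 : (1.4:ℝ) < α := by nlinarith [sq_nonneg (α - 1.4), sq_nonneg (α + 1), sq_nonneg α]
  have h2 : α < 1.5 := by nlinarith [sq_nonneg (α - 1.5), sq_nonneg (α + 1), sq_nonneg α]
  have hα0 : α ≠ 0 := by positivity
  have ha' : a * (α ^ 3 + 2) = α ^ 2 := by
    rw [ha]; field_simp
  have ha1 : (0.39:ℝ) < a := by nlinarith
  have ha2 : a < 0.43 := by nlinarith
  set e : ℕ → ℝ := fun k => (narayana k : ℝ) - a * α ^ k with he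
  have hrec3 : ∀ k, e (k + 3) = e (k + 2) + e k := by
    intro k
    have hp : α ^ (k + 3) = α ^ (k + 2) + α ^ k := by
      have h : α ^ (k + 3) = α ^ k * α ^ 3 := by ring
      rw [h, hα]; ring
    simp only [he, narayana]
    push_cast
    rw [hp]; ring
  have hrec2 : ∀ k, α * e (k + 2) = (α - α ^ 2) * e (k + 1) - e k := by
    intro k
    induction k with
    | zero =>
      have h0 : e 0 = -a := by simp [he, narayana]
      have h1' : e 1 = 1 - a * α := by simp [he, narayana]
      have h2' : e 2 = 1 - a * α ^ 2 := by
        simp only [he, narayana]; push_cast; ring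
      rw [h0, h1', h2']
      linear_combination (-a) * hα - ha'
    | succ k ih =>
      have h3 := hrec3 k
      have key : α * (α * e (k + 1 + 2)) = α * ((α - α ^ 2) * e (k + 1 + 1) - e (k + 1)) := by
        have hk3 : k + 1 + 2 = k + 3 := by ring
        have hk1 : k + 1 + 1 = k + 2 := by ring
        rw [hk3, hk1, h3]
        linear_combination α ^ 2 * ih + (-(α * e (k + 1))) * hα
      exact mul_left_cancel₀ hα0 key
  set R : ℕ → ℝ := fun k => α * e (k + 1) ^ 2 + (α ^ 2 - α) * e (k + 1) * e k + e k ^ 2 with hR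
  have hRinv : ∀ k, α * R (k + 1) = R k := by
    intro k
    have h := hrec2 k
    have hk1 : k + 1 + 1 = k + 2 := by ring
    simp only [hR, hk1]
    linear_combination (α * e (k + 2) - e k) * h
  have hRpos : ∀ k, 0 ≤ R k := by
    intro k
    simp only [hR]
    nlinarith [sq_nonneg (2 * e (k + 1) + (α - 1) * e k), sq_nonneg (e k), sq_nonneg (e (k+1)),
      mul_nonneg (le_of_lt (by linarith : (0:ℝ) < α)) (sq_nonneg (2 * e (k + 1) + (α - 1) * e k))]
  have hRmono : ∀ k, R k ≤ R 0 := by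
    intro k
    induction k with
    | zero => exact le_rfl
    | succ k ih =>
      have h3 := hRinv k
      have h4 := hRpos (k + 1)
      nlinarith
  have hR0 : R 0 ≤ 0.5 := by
    have h0 : e 0 = -a := by simp [he, narayana]
    have h1' : e 1 = 1 - a * α := by simp [he, narayana]
    have hval : R 0 = α + a * α - a * α ^ 2 - 3 * a ^ 2 - a ^ 2 * α ^ 2 := by
      simp only [hR]
      rw [h0, h1']
      linear_combination 2 * a * ha'
    rw [hval]
    exact aux_R0 α a h1 h2 ha1 ha2
  have hen : e n ^ 2 ≤ 1 := by
    have hk := hRmono n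
    have hRn : R n = α * e (n + 1) ^ 2 + (α ^ 2 - α) * e (n + 1) * e n + e n ^ 2 := rfl
    exact aux_sq α (e n) (e (n + 1)) h1 h2 (by rw [← hRn]; exact le_trans hk hR0)
  have he1 : -1 ≤ e n := by nlinarith [hen, sq_nonneg (e n + 1)]
  have he2 : e n ≤ 1 := by nlinarith [hen, sq_nonneg (e n - 1)]
  have hEn : (narayana n : ℝ) - a * α ^ n = e n := rfl
  have hp2 : (0:ℝ) < 10 ^ m2 := by positivity
  have h10 : (10:ℝ) ≤ 10 ^ m2 := by
    calc (10:ℝ) = 10 ^ 1 := by norm_num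
    _ ≤ 10 ^ m2 := by exact pow_le_pow_right₀ (by norm_num) hm2
  have hd1c : (d1 : ℝ) ≤ 9 := by exact_mod_cast hd1'
  have hd2c : (d2 : ℝ) ≤ 9 := by exact_mod_cast hd2
  have hd2c0 : (0:ℝ) ≤ (d2 : ℝ) := by positivity
  have hd1c0 : (0:ℝ) ≤ (d1 : ℝ) := by positivity
  have hb1 : ((d1:ℝ) - d2) * 10 ^ m2 ≤ 9 * 10 ^ m2 := by nlinarith
  have hb2 : -(9 * 10 ^ m2) ≤ ((d1:ℝ) - d2) * 10 ^ m2 := by nlinarith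
  have key : 9 * a * α ^ n - (d1 : ℝ) * 10 ^ (m1 + m2) =
      -(((d1:ℝ) - d2) * 10 ^ m2) - d2 - 9 * e n := by
    linear_combination heq - 9 * hEn
  rw [abs_lt, key]
  constructor
  · linarith
  · linarith
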